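/- Let G be a connected multigraph on {0,...,n} and let u be a vertex adjacent to 0 with μ_G(0,u) ≥ 2 (at least two parallel edges between 0 and u). If e is one of these parallel edges, then the map f ↦ f restricted appropriately gives a partition: the G-parking functions split into those with f(u) = 0 (in bijection with (G/e)-parking functions) and those with f(u) ≥ 1 (in bijection with (G-e)-parking functions), proving |P_G| = |P_{G/e}| + |P_{G-e}|. -/

import Mathlib

open Finset

/-- Number of edges of the multigraph with edge multiset `E` joining `v` to a vertex outside `I`. -/
def outdeg {V : Type} [Fintype V] [DecidableEq V] (E : Multiset (Sym2 V))
    (I : Finset V) (v : V) : ℕ :=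
  Multiset.card (E.filter (fun e => ∃ w, w ∉ I ∧ e = s(v, w)))

/-- `f` is a `G`-parking function with root `r`, where `G` has edge multiset `E`. -/
def IsGPF {V : Type} [Fintype V] [DecidableEq V] (E : Multiset (Sym2 V)) (r : V)
    (f : V → ℤ) : Prop :=
  f r = -1 ∧ ∀ I : Finset V, I.Nonempty → r ∉ I →
    ∃ v ∈ I, 0 ≤ f v ∧ f v < (outdeg E I v : ℤ)

/-- The simple graph underlying the multigraph with edge multiset `E`. -/
def mAdj {V : Type} [DecidableEq V] (E : Multiset (Sym2 V)) : SimpleGraph V :=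
  SimpleGraph.fromRel (fun v w => s(v, w) ∈ E)

/-- classical parking function. -/
def IsPF (n : ℕ) (a : Fin n → ℕ) : Prop :=
  ∃ σ : Equiv.Perm (Fin n), Monotone (a ∘ σ) ∧ ∀ i : Fin n, (a ∘ σ) i ≤ i

def IsCritMax (n : ℕ) (a : Fin n → ℕ) (i : Fin n) : Prop :=
  (univ.filter (fun k => a i < a k)).card = n - 1 - a i ∧ ∀ k, a i < a k → k < i

open scoped Classical in
noncomputable def cm (n : ℕ) (a : Fin n → ℕ) : ℕ :=
  (univ.filter (IsCritMax n a)).card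

noncomputable def comps {V : Type} [Fintype V] [DecidableEq V] (M : Multiset (Sym2 V)) : ℕ :=
  Nat.card (mAdj M).ConnectedComponent

noncomputable def rk {V : Type} [Fintype V] [DecidableEq V] (M : Multiset (Sym2 V)) : ℕ :=
  Fintype.card V - comps M

/-- Tutte polynomial (Whitney rank formula) of the multigraph with edges indexed by `ε`. -/
noncomputable def tutte {V : Type} [Fintype V] [DecidableEq V] {ε : Type} [Fintype ε]
    (ends : ε → Sym2 V) (x y : ℤ) : ℤ :=
  ∑ A : Finset ε,
    (x - 1) ^ (rk (Finset.univ.val.map ends) - rk (A.val.map ends)) *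
      (y - 1) ^ (A.card - rk (A.val.map ends))

noncomputable def tutteK (n : ℕ) (x y : ℤ) : ℤ :=
  tutte (fun e : ↥(⊤ : SimpleGraph (Fin (n + 1))).edgeFinset => (e : Sym2 (Fin (n + 1)))) x y

section Aux

variable {n : ℕ}

lemma gpf_singleton {E : Multiset (Sym2 (Fin (n + 1)))} {r : Fin (n + 1)} {f : Fin (n + 1) → ℤ}
    (h : IsGPF E r f) {v : Fin (n + 1)} (hv : v ≠ r) :
    0 ≤ f v ∧ f v < (outdeg E {v} v : ℤ) := by
  obtain ⟨w, hw, h1, h2⟩ := h.2 {v} ⟨v, Finset.mem_singleton_self v⟩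
    (fun hr => hv ((Finset.mem_singleton.mp hr).symm))
  rw [Finset.mem_singleton] at hw
  subst hw
  exact ⟨h1, h2⟩

lemma finite_gpf (E : Multiset (Sym2 (Fin (n + 1)))) (r : Fin (n + 1)) :
    Finite {f : Fin (n + 1) → ℤ // IsGPF E r f} := by
  haveI := (Set.finite_Icc (-1 : ℤ) (Multiset.card E : ℤ)).to_subtype
  have hb : ∀ f : {f : Fin (n + 1) → ℤ // IsGPF E r f}, ∀ v,
      f.1 v ∈ Set.Icc (-1 : ℤ) (Multiset.card E : ℤ) := by
    intro f v
    by_cases hv : v = r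
    · subst hv
      rw [f.2.1]
      exact ⟨le_refl _, by omega⟩
    · obtain ⟨h1, h2⟩ := gpf_singleton f.2 hv
      refine ⟨by omega, ?_⟩
      have : outdeg E {v} v ≤ Multiset.card E :=
        by unfold outdeg; convert Multiset.card_le_card (Multiset.filter_le _ E)
      have : (outdeg E {v} v : ℤ) ≤ (Multiset.card E : ℤ) := by exact_mod_cast this
      omega
  apply Finite.of_injective
    (fun f : {f : Fin (n + 1) → ℤ // IsGPF E r f} =>
      (fun v => (⟨f.1 v, hb f v⟩ : Set.Icc (-1 : ℤ) (Multiset.card E : ℤ))))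
  intro f g h
  exact Subtype.ext (funext fun v => congrArg Subtype.val (congrFun h v))

lemma outdeg_erase_ne {E : Multiset (Sym2 (Fin (n + 1)))} {u : Fin (n + 1)}
    (hmem : s(0, u) ∈ E) {I : Finset (Fin (n + 1))} {v : Fin (n + 1)}
    (hv0 : v ≠ 0) (hvu : v ≠ u) :
    outdeg (E.erase s(0, u)) I v = outdeg E I v := by
  conv_rhs => rw [← Multiset.cons_erase hmem]
  unfold outdeg
  letI : ∀ a : Sym2 (Fin (n + 1)), Decidable (∃ w, w ∉ I ∧ a = s(v, w)) :=
    fun _ => Fintype.decidableExistsFintype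
  rw [Multiset.filter_cons_of_neg]
  rintro ⟨w, hw, hEq⟩
  rw [Sym2.eq_iff] at hEq
  rcases hEq with ⟨h1, h2⟩ | ⟨h1, h2⟩
  · exact hv0 h1.symm
  · exact hvu h2.symm

lemma outdeg_erase_u {E : Multiset (Sym2 (Fin (n + 1)))} {u : Fin (n + 1)}
    (hmem : s(0, u) ∈ E) {I : Finset (Fin (n + 1))} (hI : (0 : Fin (n + 1)) ∉ I) :
    outdeg E I u = outdeg (E.erase s(0, u)) I u + 1 := by
  conv_lhs => rw [← Multiset.cons_erase hmem]
  unfold outdeg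
  letI : ∀ a : Sym2 (Fin (n + 1)), Decidable (∃ w, w ∉ I ∧ a = s(u, w)) :=
    fun _ => Fintype.decidableExistsFintype
  rw [Multiset.filter_cons_of_pos _ ⟨0, hI, Sym2.eq_swap⟩, Multiset.card_cons]

lemma pred_transfer (u : Fin (n + 1)) (hu : u ≠ 0)
    (I' : Finset {v : Fin (n + 1) // v ≠ u})
    (hr : (⟨0, hu.symm⟩ : {v : Fin (n + 1) // v ≠ u}) ∉ I')
    (v' : {v : Fin (n + 1) // v ≠ u}) (hv0 : v'.1 ≠ 0) (e : Sym2 (Fin (n + 1))) :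
    (∃ w', w' ∉ I' ∧ Sym2.map
        (fun v => if h : v = u then (⟨0, hu.symm⟩ : {v : Fin (n + 1) // v ≠ u}) else ⟨v, h⟩) e
        = s(v', w'))
      ↔ (∃ w, w ∉ I'.image Subtype.val ∧ e = s(v'.1, w)) := by
  set π : Fin (n + 1) → {v : Fin (n + 1) // v ≠ u} :=
    fun v => if h : v = u then ⟨0, hu.symm⟩ else ⟨v, h⟩ with hπ
  have hπv : ∀ x : Fin (n + 1), π x = v' → x = v'.1 := by
    intro x hx
    by_cases hxu : x = u
    · exfalso
      rw [hπ] at hx; simp only [hxu, dif_pos] at hx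
      exact hv0 (congrArg Subtype.val hx).symm
    · rw [hπ] at hx; simp only [dif_neg hxu] at hx
      exact congrArg Subtype.val hx
  have hπmem : ∀ x : Fin (n + 1), x ∉ I'.image Subtype.val → π x ∉ I' := by
    intro x hx hmem
    by_cases hxu : x = u
    · rw [hπ] at hmem; simp only [hxu, dif_pos] at hmem; exact hr hmem
    · rw [hπ] at hmem; simp only [dif_neg hxu] at hmem
      exact hx (Finset.mem_image.mpr ⟨⟨x, hxu⟩, hmem, rfl⟩)
  have hπmem' : ∀ x : Fin (n + 1), π x ∉ I' → x ∉ I'.image Subtype.val := by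
    intro x hx hmem
    obtain ⟨c, hc, hcv⟩ := Finset.mem_image.mp hmem
    have hxu : x ≠ u := hcv ▸ c.2
    rw [hπ] at hx; simp only [dif_neg hxu] at hx
    exact hx (by convert hc using 1; exact Subtype.ext hcv.symm)
  induction e using Sym2.ind with
  | _ a b =>
    rw [Sym2.map_pair_eq]
    constructor
    · rintro ⟨w', hw', hEq⟩
      rw [Sym2.eq_iff] at hEq
      rcases hEq with ⟨h1, h2⟩ | ⟨h1, h2⟩
      · exact ⟨b, hπmem' b (by rw [h2]; exact hw'), by rw [hπv a h1]⟩
      · exact ⟨a, hπmem' a (by rw [h1]; exact hw'), by rw [hπv b h2]; exact Sym2.eq_swap⟩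
    · rintro ⟨w, hw, hEq⟩
      have hπself : π v'.1 = v' := by
        rw [hπ]; simp only [dif_neg v'.2]
      rw [Sym2.eq_iff] at hEq
      rcases hEq with ⟨h1, rfl⟩ | ⟨rfl, h2⟩
      · exact ⟨π b, hπmem b hw, by rw [h1, hπself]⟩
      · exact ⟨π a, hπmem a hw, by rw [h2, hπself]; exact Sym2.eq_swap⟩

lemma outdeg_contract (u : Fin (n + 1)) (hu : u ≠ 0) (Ed : Multiset (Sym2 (Fin (n + 1))))
    (I' : Finset {v : Fin (n + 1) // v ≠ u})
    (hr : (⟨0, hu.symm⟩ : {v : Fin (n + 1) // v ≠ u}) ∉ I')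
    (v' : {v : Fin (n + 1) // v ≠ u}) (hv0 : v'.1 ≠ 0) :
    outdeg (Ed.map (Sym2.map
        (fun v => if h : v = u then (⟨0, hu.symm⟩ : {v : Fin (n + 1) // v ≠ u}) else ⟨v, h⟩)))
      I' v' = outdeg Ed (I'.image Subtype.val) v'.1 := by
  unfold outdeg
  rw [Multiset.filter_map, Multiset.card_map]
  congr 1
  congr 1
  funext e
  exact propext (pred_transfer u hu I' hr v' hv0 e)

end Aux

/-- if there are at least two parallel edges between `0` and `u` and
`e` is one of them, then `|P_G| = |P_{G/e}| + |P_{G-e}|`. -/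
theorem parallel_edge_partition (n : ℕ) (E : Multiset (Sym2 (Fin (n + 1))))
    (hconn : (mAdj E).Connected) (u : Fin (n + 1)) (hu : u ≠ 0)
    (hmu : 2 ≤ E.count s(0, u)) :
    Nat.card {f : Fin (n + 1) → ℤ // IsGPF E 0 f}
      = Nat.card {g : {v : Fin (n + 1) // v ≠ u} → ℤ // IsGPF
          ((E.erase s(0, u)).map (Sym2.map
            (fun v => if h : v = u then (⟨0, hu.symm⟩ : {v : Fin (n + 1) // v ≠ u}) else ⟨v, h⟩)))
          (⟨0, hu.symm⟩ : {v : Fin (n + 1) // v ≠ u}) g}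
        + Nat.card {g : Fin (n + 1) → ℤ // IsGPF (E.erase s(0, u)) 0 g} := by
  classical
  have hmem : s(0, u) ∈ E := by
    rw [← Multiset.count_pos]; omega
  haveI hFinE : Finite {f : Fin (n + 1) → ℤ // IsGPF E 0 f} := finite_gpf E 0
  haveI : Finite {f : Fin (n + 1) → ℤ // IsGPF E 0 f ∧ f u = 0} :=
    Finite.of_injective
      (fun f => (⟨f.1, f.2.1⟩ : {f : Fin (n + 1) → ℤ // IsGPF E 0 f}))
      (by
        intro a b h
        have h' := congrArg Subtype.val h
        exact Subtype.ext h')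
  haveI : Finite {f : Fin (n + 1) → ℤ // IsGPF E 0 f ∧ 1 ≤ f u} :=
    Finite.of_injective
      (fun f => (⟨f.1, f.2.1⟩ : {f : Fin (n + 1) → ℤ // IsGPF E 0 f}))
      (by
        intro a b h
        have h' := congrArg Subtype.val h
        exact Subtype.ext h')
  have h0I : ∀ I' : Finset {v : Fin (n + 1) // v ≠ u},
      (⟨0, hu.symm⟩ : {v : Fin (n + 1) // v ≠ u}) ∉ I' →
      (0 : Fin (n + 1)) ∉ I'.image Subtype.val := by
    intro I' hr h0
    obtain ⟨c, hc, hcv⟩ := Finset.mem_image.mp h0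
    exact hr (by rwa [show c = ⟨0, hu.symm⟩ from Subtype.ext hcv] at hc)
  -- the partition equiv
  let eS : {f : Fin (n + 1) → ℤ // IsGPF E 0 f} ≃
      {f : Fin (n + 1) → ℤ // IsGPF E 0 f ∧ f u = 0} ⊕
        {f : Fin (n + 1) → ℤ // IsGPF E 0 f ∧ 1 ≤ f u} :=
  { toFun := fun f => if h : f.1 u = 0 then Sum.inl ⟨f.1, f.2, h⟩ else
      Sum.inr ⟨f.1, f.2, by have := (gpf_singleton f.2 hu).1; omega⟩
    invFun := Sum.elim (fun f => ⟨f.1, f.2.1⟩) (fun f => ⟨f.1, f.2.1⟩)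
    left_inv := fun f => by by_cases h : f.1 u = 0 <;> simp [h]
    right_inv := fun x => by
      rcases x with f | f
      · simp [f.2.2]
      · have h : ¬ f.1 u = 0 := by have := f.2.2; omega
        simp [h] }
  -- the contraction equiv
  let e0 : {f : Fin (n + 1) → ℤ // IsGPF E 0 f ∧ f u = 0} ≃
      {g : {v : Fin (n + 1) // v ≠ u} → ℤ // IsGPF
        ((E.erase s(0, u)).map (Sym2.map
          (fun v => if h : v = u then (⟨0, hu.symm⟩ : {v : Fin (n + 1) // v ≠ u}) else ⟨v, h⟩)))
        (⟨0, hu.symm⟩ : {v : Fin (n + 1) // v ≠ u}) g} :=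
  { toFun := fun f => ⟨fun v' => f.1 v'.1, by
      constructor
      · exact f.2.1.1
      · intro I' hne hr
        obtain ⟨v, hv, h1, h2⟩ := f.2.1.2 (I'.image Subtype.val) (hne.image _) (h0I I' hr)
        obtain ⟨c, hc, rfl⟩ := Finset.mem_image.mp hv
        have hc0 : c.1 ≠ 0 := fun h => (h0I I' hr) (h ▸ hv)
        refine ⟨c, hc, h1, ?_⟩
        rw [outdeg_contract u hu (E.erase s(0, u)) I' hr c hc0,
          outdeg_erase_ne hmem hc0 c.2]
        exact h2⟩
    invFun := fun g => ⟨fun v => if h : v = u then 0 else g.1 ⟨v, h⟩, by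
      refine ⟨⟨?_, ?_⟩, by dsimp only; rw [dif_pos rfl]⟩
      · dsimp only; rw [dif_neg (fun h : (0 : Fin (n + 1)) = u => hu h.symm)]
        exact g.2.1
      · intro I hne h0
        by_cases huI : u ∈ I
        · refine ⟨u, huI, ?_, ?_⟩
          · dsimp only; rw [dif_pos rfl]
          · dsimp only; rw [dif_pos rfl]
            have hf : s(0, u) ∈ E.filter (fun e => ∃ w, w ∉ I ∧ e = s(u, w)) :=
              Multiset.mem_filter.mpr ⟨hmem, ⟨0, h0, Sym2.eq_swap⟩⟩
            have : 0 < outdeg E I u :=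
              Multiset.card_pos_iff_exists_mem.mpr ⟨_, by convert hf⟩
            exact_mod_cast this
        · have hIeq : (Finset.univ.filter
              (fun c : {v : Fin (n + 1) // v ≠ u} => c.1 ∈ I)).image Subtype.val = I := by
            ext w
            simp only [Finset.mem_image, Finset.mem_filter, Finset.mem_univ, true_and]
            constructor
            · rintro ⟨c, hc, rfl⟩; exact hc
            · intro hw; exact ⟨⟨w, fun h => huI (h ▸ hw)⟩, hw, rfl⟩
          have hne' : (Finset.univ.filter
              (fun c : {v : Fin (n + 1) // v ≠ u} => c.1 ∈ I)).Nonempty := by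
            obtain ⟨w, hw⟩ := hne
            exact ⟨⟨w, fun h => huI (h ▸ hw)⟩,
              Finset.mem_filter.mpr ⟨Finset.mem_univ _, hw⟩⟩
          have hr : (⟨0, hu.symm⟩ : {v : Fin (n + 1) // v ≠ u}) ∉
              Finset.univ.filter (fun c : {v : Fin (n + 1) // v ≠ u} => c.1 ∈ I) :=
            fun h => h0 (Finset.mem_filter.mp h).2
          obtain ⟨c, hc, h1, h2⟩ := g.2.2 _ hne' hr
          have hcI : c.1 ∈ I := (Finset.mem_filter.mp hc).2
          have hc0 : c.1 ≠ 0 := fun h => h0 (h ▸ hcI)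
          have heq := outdeg_contract u hu (E.erase s(0, u)) _ hr c hc0
          rw [hIeq, outdeg_erase_ne hmem hc0 c.2] at heq
          rw [heq] at h2
          refine ⟨c.1, hcI, ?_, ?_⟩
          · dsimp only; rw [dif_neg c.2]; exact h1
          · dsimp only; rw [dif_neg c.2]; exact h2⟩
    left_inv := fun f => Subtype.ext (funext fun v => by
      by_cases h : v = u
      · subst h; dsimp only; rw [dif_pos rfl]; exact f.2.2.symm
      · dsimp only; rw [dif_neg h])
    right_inv := fun g => Subtype.ext (funext fun v' => by dsimp only; rw [dif_neg v'.2]) }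
  -- the deletion equiv
  let ePos : {f : Fin (n + 1) → ℤ // IsGPF E 0 f ∧ 1 ≤ f u} ≃
      {g : Fin (n + 1) → ℤ // IsGPF (E.erase s(0, u)) 0 g} :=
  { toFun := fun f => ⟨fun v => if v = u then f.1 v - 1 else f.1 v, by
      constructor
      · dsimp only; rw [if_neg (fun h : (0 : Fin (n + 1)) = u => hu h.symm)]
        exact f.2.1.1
      · intro I hne h0
        obtain ⟨v, hv, h1, h2⟩ := f.2.1.2 I hne h0
        by_cases hvu : v = u
        · subst hvu
          refine ⟨v, hv, ?_, ?_⟩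
          · dsimp only; rw [if_pos rfl]; have := f.2.2; omega
          · dsimp only; rw [if_pos rfl]
            rw [outdeg_erase_u hmem h0] at h2
            push_cast at h2 ⊢; omega
        · have hv0 : v ≠ 0 := fun h => h0 (h ▸ hv)
          refine ⟨v, hv, ?_, ?_⟩
          · dsimp only; rw [if_neg hvu]; exact h1
          · dsimp only; rw [if_neg hvu, outdeg_erase_ne hmem hv0 hvu]; exact h2⟩
    invFun := fun g => ⟨fun v => if v = u then g.1 v + 1 else g.1 v, by
      refine ⟨⟨?_, ?_⟩, ?_⟩
      · dsimp only; rw [if_neg (fun h : (0 : Fin (n + 1)) = u => hu h.symm)]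
        exact g.2.1
      · intro I hne h0
        obtain ⟨v, hv, h1, h2⟩ := g.2.2 I hne h0
        by_cases hvu : v = u
        · subst hvu
          refine ⟨v, hv, ?_, ?_⟩
          · dsimp only; rw [if_pos rfl]; omega
          · dsimp only; rw [if_pos rfl, outdeg_erase_u hmem h0]
            push_cast at h2 ⊢; omega
        · have hv0 : v ≠ 0 := fun h => h0 (h ▸ hv)
          refine ⟨v, hv, ?_, ?_⟩
          · dsimp only; rw [if_neg hvu]; exact h1
          · dsimp only; rw [if_neg hvu, ← outdeg_erase_ne hmem hv0 hvu]; exact h2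
      · dsimp only; rw [if_pos rfl]
        have := (gpf_singleton g.2 hu).1; omega⟩
    left_inv := fun f => Subtype.ext (funext fun v => by
      by_cases h : v = u <;> simp [h])
    right_inv := fun g => Subtype.ext (funext fun v => by
      by_cases h : v = u <;> simp [h]) }
  rw [Nat.card_congr eS, Nat.card_sum, Nat.card_congr e0, Nat.card_congr ePos]
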